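/- For the DGP y₂ = 1 + 0.8 f + ε₂, y₃ = 1 + 0.8 f + ε₃, y₁ = y₂ + y₃, with E[ε₂|I] = E[ε₃|I] = 0, if the base forecasts are conditionally unbiased (E[ŷᵢ|I] = E[yᵢ|I]), then the top-down reconciled forecasts ỹ = S G ŷ with G = [[1/2,0,0],[1/2,0,0]] and S = [[1,1],[1,0],[0,1]] are conditionally unbiased: E[ỹ|I] = E[y|I]. -/

import Mathlib

open MeasureTheory Matrix

/-- Counterexample to "top-down can never be unbiased": for the DGP
`y₂ = 1 + 0.8 f + ε₂`, `y₃ = 1 + 0.8 f + ε₃`, `y₁ = y₂ + y₃` with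
`E[ε₂|I] = E[ε₃|I] = 0`, conditionally unbiased base forecasts reconciled
top-down via `G = [[1/2,0,0],[1/2,0,0]]` and `S = [[1,1],[1,0],[0,1]]` remain
conditionally unbiased. -/
theorem top_down_unbiased_example {α : Type*}
    {m0 : MeasurableSpace α} (μ : Measure α) (I : MeasurableSpace α)
    (hI : I ≤ m0)
    (f e2 e3 : α → ℝ)
    (hf : Integrable f μ) (he2 : Integrable e2 μ) (he3 : Integrable e3 μ)
    (he2I : (μ[e2 | I]) =ᵐ[μ] fun _ => (0 : ℝ))
    (he3I : (μ[e3 | I]) =ᵐ[μ] fun _ => (0 : ℝ))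
    (y : α → Fin 3 → ℝ)
    (hy2 : ∀ ω, y ω 1 = 1 + 0.8 * f ω + e2 ω)
    (hy3 : ∀ ω, y ω 2 = 1 + 0.8 * f ω + e3 ω)
    (hy1 : ∀ ω, y ω 0 = y ω 1 + y ω 2)
    (yhat : α → Fin 3 → ℝ) (hyhat : ∀ i, Integrable (fun ω => yhat ω i) μ)
    (hunbiased : ∀ i, (μ[fun ω => yhat ω i | I]) =ᵐ[μ] (μ[fun ω => y ω i | I]))
    (S : Matrix (Fin 3) (Fin 2) ℝ) (hS : S = !![1, 1; 1, 0; 0, 1])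
    (G : Matrix (Fin 2) (Fin 3) ℝ) (hG : G = !![1/2, 0, 0; 1/2, 0, 0])
    (ytilde : α → Fin 3 → ℝ)
    (hytilde : ∀ ω, ytilde ω = (S * G).mulVec (yhat ω)) :
    ∀ i, (μ[fun ω => ytilde ω i | I]) =ᵐ[μ] (μ[fun ω => y ω i | I]) := by
  set g : α → ℝ := fun ω => 1 + 0.8 * f ω with hgdef
  have hy1e : (fun ω => y ω 1) = g + e2 := funext fun ω => by
    simp [hy2 ω, hgdef]
  have hy2e : (fun ω => y ω 2) = g + e3 := funext fun ω => by
    simp [hy3 ω, hgdef]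
  -- pointwise form of the reconciled forecasts
  have ht0 : (fun ω => ytilde ω 0) = fun ω => yhat ω 0 := funext fun ω => by
    rw [hytilde ω, hS, hG]
    simp [Matrix.mulVec, Matrix.mul_apply, dotProduct, Fin.sum_univ_three]
    norm_num
  have ht1 : (fun ω => ytilde ω 1) = (2⁻¹ : ℝ) • (fun ω => yhat ω 0) :=
    funext fun ω => by
      rw [hytilde ω, hS, hG]
      simp [Matrix.mulVec, Matrix.mul_apply, dotProduct, Fin.sum_univ_three]
      try norm_num
      try ring
  have ht2 : (fun ω => ytilde ω 2) = (2⁻¹ : ℝ) • (fun ω => yhat ω 0) :=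
    funext fun ω => by
      rw [hytilde ω, hS, hG]
      simp [Matrix.mulVec, Matrix.mul_apply, dotProduct, Fin.sum_univ_three]
      try norm_num
      try ring
  by_cases hg : Integrable g μ
  · -- the generic case: everything is integrable
    have hy1int : Integrable (fun ω => y ω 1) μ := hy1e ▸ hg.add he2
    have hy2int : Integrable (fun ω => y ω 2) μ := hy2e ▸ hg.add he3
    have h1 : (μ[fun ω => y ω 1 | I]) =ᵐ[μ] (μ[g | I]) := by
      rw [hy1e]
      calc μ[g + e2 | I] =ᵐ[μ] μ[g | I] + μ[e2 | I] := condExp_add hg he2 I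
        _ =ᵐ[μ] μ[g | I] := by filter_upwards [he2I] with ω h; simp [h]
    have h2 : (μ[fun ω => y ω 2 | I]) =ᵐ[μ] (μ[g | I]) := by
      rw [hy2e]
      calc μ[g + e3 | I] =ᵐ[μ] μ[g | I] + μ[e3 | I] := condExp_add hg he3 I
        _ =ᵐ[μ] μ[g | I] := by filter_upwards [he3I] with ω h; simp [h]
    have h0 : (μ[fun ω => y ω 0 | I]) =ᵐ[μ] fun ω => 2 * (μ[g | I]) ω := by
      have heq : (fun ω => y ω 0) = (fun ω => y ω 1) + (fun ω => y ω 2) :=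
        funext fun ω => hy1 ω
      rw [heq]
      calc μ[(fun ω => y ω 1) + (fun ω => y ω 2) | I]
          =ᵐ[μ] μ[fun ω => y ω 1 | I] + μ[fun ω => y ω 2 | I] :=
            condExp_add hy1int hy2int I
        _ =ᵐ[μ] fun ω => 2 * (μ[g | I]) ω := by
            filter_upwards [h1, h2] with ω ha hb
            simp only [Pi.add_apply, ha, hb]; ring
    have hhalf : (μ[(2⁻¹ : ℝ) • (fun ω => yhat ω 0) | I]) =ᵐ[μ] (μ[g | I]) := by
      calc μ[(2⁻¹ : ℝ) • (fun ω => yhat ω 0) | I]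
          =ᵐ[μ] (2⁻¹ : ℝ) • μ[fun ω => yhat ω 0 | I] := condExp_smul _ _ I
        _ =ᵐ[μ] (μ[g | I]) := by
            filter_upwards [hunbiased 0, h0] with ω ha hb
            simp only [Pi.smul_apply, smul_eq_mul, ha, hb]; ring
    intro i
    fin_cases i
    · show (μ[fun ω => ytilde ω 0 | I]) =ᵐ[μ] (μ[fun ω => y ω 0 | I])
      exact (condExp_congr_ae (by rw [ht0])).trans (hunbiased 0)
    · show (μ[fun ω => ytilde ω 1 | I]) =ᵐ[μ] (μ[fun ω => y ω 1 | I])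
      exact ((condExp_congr_ae (by rw [ht1])).trans hhalf).trans h1.symm
    · show (μ[fun ω => ytilde ω 2 | I]) =ᵐ[μ] (μ[fun ω => y ω 2 | I])
      exact ((condExp_congr_ae (by rw [ht2])).trans hhalf).trans h2.symm
  · -- degenerate case: `g` not integrable, so all conditional expectations vanish
    have hy1int : ¬ Integrable (fun ω => y ω 1) μ := fun h => by
      have : Integrable g μ := by
        have := h.sub he2
        simpa [hy1e] using this
      exact hg this
    have hy2int : ¬ Integrable (fun ω => y ω 2) μ := fun h => by
      have : Integrable g μ := by
        have := h.sub he3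
        simpa [hy2e] using this
      exact hg this
    have hy0int : ¬ Integrable (fun ω => y ω 0) μ := fun h => by
      have hy0e : (fun ω => y ω 0) = (fun ω => 2 * g ω) + e2 + e3 :=
        funext fun ω => by
          simp [hy1 ω, hy2 ω, hy3 ω, hgdef]; ring
      have h2g : Integrable (fun ω => 2 * g ω) μ := by
        have := (h.sub he3).sub he2
        have heq : ((fun ω => y ω 0) - e3 - e2) = fun ω => 2 * g ω :=
          funext fun ω => by
            simp [hy1 ω, hy2 ω, hy3 ω, hgdef]; ring
        rwa [heq] at this
      exact hg (by simpa using h2g.const_mul (2⁻¹ : ℝ))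
    have hz : ∀ i, (μ[fun ω => y ω i | I]) = 0 := by
      intro i
      fin_cases i
      · exact condExp_of_not_integrable hy0int
      · exact condExp_of_not_integrable hy1int
      · exact condExp_of_not_integrable hy2int
    have hz0 : (μ[fun ω => yhat ω 0 | I]) =ᵐ[μ] (0 : α → ℝ) := by
      have := hunbiased 0
      rw [hz 0] at this
      exact this
    have hhalf : (μ[(2⁻¹ : ℝ) • (fun ω => yhat ω 0) | I]) =ᵐ[μ] (0 : α → ℝ) := by
      calc μ[(2⁻¹ : ℝ) • (fun ω => yhat ω 0) | I]
          =ᵐ[μ] (2⁻¹ : ℝ) • μ[fun ω => yhat ω 0 | I] := condExp_smul _ _ I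
        _ =ᵐ[μ] (0 : α → ℝ) := by
            filter_upwards [hz0] with ω h
            simp [h]
    intro i
    fin_cases i
    · show (μ[fun ω => ytilde ω 0 | I]) =ᵐ[μ] (μ[fun ω => y ω 0 | I])
      rw [hz 0]
      exact (condExp_congr_ae (by rw [ht0])).trans hz0
    · show (μ[fun ω => ytilde ω 1 | I]) =ᵐ[μ] (μ[fun ω => y ω 1 | I])
      rw [hz 1]
      exact (condExp_congr_ae (by rw [ht1])).trans hhalf
    · show (μ[fun ω => ytilde ω 2 | I]) =ᵐ[μ] (μ[fun ω => y ω 2 | I])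
      rw [hz 2]
      exact (condExp_congr_ae (by rw [ht2])).trans hhalf
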